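/- Fix constants b ∈ ℝ, σ ∈ ℝ, μ > 0, β > 0, γ > 0, a continuous function W : [0,∞) → ℝ with W(0) = 0, and initial values X₀ ≥ 0, V₀ ≥ 0. Suppose (X, V, L) and (X', V', L') are two triples of continuous functions where X, X' : [0,∞) → [0,∞), L is a boundary term for X at zero, L' is a boundary term for X' at zero, and for all t ≥ 0: X(t) = X₀ + ∫₀ᵗ [b + μV(s)] ds + σW(t) + L(t) and V(t) = V₀ − γ∫₀ᵗ V(s) ds + (β/μ)L(t) (and likewise for the primed triple). Then X = X', V = V', and L = L'; i.e., pathwise uniqueness holds for the near-Halfin–Whitt limit system. -/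

import Mathlib

open MeasureTheory

/-- `L` is a boundary term for `X` at zero: `L(0) = 0`, `L ≥ 0` and nondecreasing
on `[0,∞)`, and the Lebesgue–Stieltjes measure induced by `L` assigns zero mass
to the set `{t ≥ 0 : X(t) > 0}`. -/
def IsBoundaryTerm (X L : ℝ → ℝ) : Prop :=
  L 0 = 0 ∧ (∀ t : ℝ, 0 ≤ t → 0 ≤ L t) ∧ MonotoneOn L (Set.Ici 0) ∧
  ∃ S : StieltjesFunction ℝ, (∀ t : ℝ, 0 ≤ t → S t = L t) ∧
    (∀ t : ℝ, t ≤ 0 → S t = 0) ∧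
    S.measure {t : ℝ | 0 ≤ t ∧ 0 < X t} = 0

lemma skorokhod_diff_bound (X L ψ X' L' ψ' : ℝ → ℝ) (t ε : ℝ) (ht : 0 ≤ t) (hε : 0 ≤ ε)
    (hL0 : L 0 = 0) (hL'0 : L' 0 = 0)
    (hLc : ContinuousOn L (Set.Icc 0 t)) (hL'c : ContinuousOn L' (Set.Icc 0 t))
    (hL'mono : MonotoneOn L' (Set.Ici 0))
    (S : StieltjesFunction ℝ) (hS : ∀ s : ℝ, 0 ≤ s → S s = L s)
    (hSmeas : S.measure {s : ℝ | 0 ≤ s ∧ 0 < X s} = 0)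
    (hXdef : ∀ s : ℝ, 0 ≤ s → X s = ψ s + L s)
    (hX'def : ∀ s : ℝ, 0 ≤ s → X' s = ψ' s + L' s)
    (hX'nn : ∀ s : ℝ, 0 ≤ s → 0 ≤ X' s)
    (hψ : ∀ s : ℝ, 0 ≤ s → s ≤ t → -ε ≤ ψ s - ψ' s) :
    L t - L' t ≤ ε := by
  by_contra hcon
  push_neg at hcon
  set A : Set ℝ := Set.Icc 0 t ∩ (fun s => L s - L' s) ⁻¹' Set.Iic ε with hA
  have hAclosed : IsClosed A :=
    (hLc.sub hL'c).preimage_isClosed_of_isClosed isClosed_Icc isClosed_Iic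
  have h0A : (0:ℝ) ∈ A := by
    constructor
    · exact ⟨le_refl 0, ht⟩
    · simp [hL0, hL'0, hε]
  have hbdd : BddAbove A := BddAbove.mono Set.inter_subset_left (bddAbove_Icc)
  set τ := sSup A with hτ
  have hτA : τ ∈ A := hAclosed.csSup_mem ⟨0, h0A⟩ hbdd
  have hτ0 : 0 ≤ τ := hτA.1.1
  have hτt : τ ≤ t := hτA.1.2
  have hDτ : L τ - L' τ ≤ ε := hτA.2
  have hgt : ∀ s : ℝ, τ < s → s ≤ t → ε < L s - L' s := by
    intro s hs1 hs2
    by_contra hle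
    push_neg at hle
    have : s ∈ A := ⟨⟨le_trans hτ0 hs1.le, hs2⟩, hle⟩
    exact absurd (le_csSup hbdd this) (not_le.mpr hs1)
  have hsub : Set.Ioc τ t ⊆ {s : ℝ | 0 ≤ s ∧ 0 < X s} := by
    intro s hs
    have hs0 : 0 ≤ s := le_trans hτ0 hs.1.le
    refine ⟨hs0, ?_⟩
    have h1 : ε < L s - L' s := hgt s hs.1 hs.2
    have h2 : -ε ≤ ψ s - ψ' s := hψ s hs0 hs.2
    have h3 : 0 ≤ X' s := hX'nn s hs0
    have := hXdef s hs0
    have := hX'def s hs0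
    nlinarith
  have hmeas0 : S.measure (Set.Ioc τ t) = 0 :=
    le_antisymm (le_trans (measure_mono hsub) (le_of_eq hSmeas)) zero_le
  rw [StieltjesFunction.measure_Ioc, hS t ht, hS τ hτ0] at hmeas0
  have hle0 : L t - L τ ≤ 0 := by
    by_contra hpos
    push_neg at hpos
    rw [ENNReal.ofReal_eq_zero] at hmeas0
    linarith
  have hmono : L' τ ≤ L' t := hL'mono hτ0 (le_trans hτ0 hτt) hτt
  linarith

/-- Pathwise uniqueness for the near-Halfin–Whitt limit system with server
vacations: two continuous solutions `(X, V, L)` and `(X', V', L')` of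
`X(t) = X₀ + ∫₀ᵗ [b + μV(s)] ds + σW(t) + L(t)`,
`V(t) = V₀ − γ∫₀ᵗ V(s) ds + (β/μ)L(t)`,
with `X, X' ≥ 0` and `L, L'` boundary terms at zero, coincide. -/
theorem near_hw_limit_pathwise_uniqueness
    (b σ μ β γ : ℝ) (hμ : 0 < μ) (hβ : 0 < β) (hγ : 0 < γ)
    (W : ℝ → ℝ) (hW : ContinuousOn W (Set.Ici 0)) (hW0 : W 0 = 0)
    (X₀ V₀ : ℝ) (hX₀ : 0 ≤ X₀) (hV₀ : 0 ≤ V₀)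
    (X V L X' V' L' : ℝ → ℝ)
    (hX : ContinuousOn X (Set.Ici 0)) (hV : ContinuousOn V (Set.Ici 0))
    (hL : ContinuousOn L (Set.Ici 0))
    (hX' : ContinuousOn X' (Set.Ici 0)) (hV' : ContinuousOn V' (Set.Ici 0))
    (hL' : ContinuousOn L' (Set.Ici 0))
    (hXnn : ∀ t : ℝ, 0 ≤ t → 0 ≤ X t) (hXnn' : ∀ t : ℝ, 0 ≤ t → 0 ≤ X' t)
    (hbdry : IsBoundaryTerm X L) (hbdry' : IsBoundaryTerm X' L')
    (heqX : ∀ t : ℝ, 0 ≤ t →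
      X t = X₀ + (∫ s in (0:ℝ)..t, (b + μ * V s)) + σ * W t + L t)
    (heqV : ∀ t : ℝ, 0 ≤ t →
      V t = V₀ - γ * (∫ s in (0:ℝ)..t, V s) + (β / μ) * L t)
    (heqX' : ∀ t : ℝ, 0 ≤ t →
      X' t = X₀ + (∫ s in (0:ℝ)..t, (b + μ * V' s)) + σ * W t + L' t)
    (heqV' : ∀ t : ℝ, 0 ≤ t →
      V' t = V₀ - γ * (∫ s in (0:ℝ)..t, V' s) + (β / μ) * L' t) :
    ∀ t : ℝ, 0 ≤ t → X t = X' t ∧ V t = V' t ∧ L t = L' t := by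
  obtain ⟨hL0, hLnn, hLmono, S, hS, hS0, hSmeas⟩ := hbdry
  obtain ⟨hL'0, hL'nn, hL'mono, S', hS', hS'0, hS'meas⟩ := hbdry'
  -- continuous global extensions of V, V'
  set Vc : ℝ → ℝ := fun s => V (max s 0) with hVc
  set Vc' : ℝ → ℝ := fun s => V' (max s 0) with hVc'
  have hmaxc : Continuous (fun s : ℝ => max s 0) := continuous_id.max continuous_const
  have hVcc : Continuous Vc := hV.comp_continuous hmaxc (fun x => le_max_right x 0)
  have hVc'c : Continuous Vc' := hV'.comp_continuous hmaxc (fun x => le_max_right x 0)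
  set g : ℝ → ℝ := fun s => |Vc s - Vc' s| with hg
  have hgc : Continuous g := (hVcc.sub hVc'c).abs
  have hgnn : ∀ s : ℝ, 0 ≤ g s := fun s => abs_nonneg _
  set F : ℝ → ℝ := fun u => ∫ s in (0:ℝ)..u, g s with hF
  have hFd : ∀ u : ℝ, HasDerivAt F (g u) u :=
    fun u => (hgc.integral_hasStrictDerivAt 0 u).hasDerivAt
  have hFcont : Continuous F := by
    rw [continuous_iff_continuousAt]; exact fun u => (hFd u).continuousAt
  have hgi : ∀ a c : ℝ, IntervalIntegrable g volume a c :=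
    fun a c => hgc.intervalIntegrable a c
  have hFnn : ∀ u : ℝ, 0 ≤ u → 0 ≤ F u := by
    intro u hu
    exact intervalIntegral.integral_nonneg hu (fun s _ => hgnn s)
  have hFmono : ∀ s t : ℝ, 0 ≤ s → s ≤ t → F s ≤ F t := by
    intro s t hs hst
    have hadd : F s + (∫ u in s..t, g u) = F t :=
      intervalIntegral.integral_add_adjacent_intervals (hgi 0 s) (hgi s t)
    have : 0 ≤ ∫ u in s..t, g u :=
      intervalIntegral.integral_nonneg hst (fun u _ => hgnn u)
    linarith
  -- integral congruences: V = Vc on [0,u]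
  have hVeqVc : ∀ s : ℝ, 0 ≤ s → Vc s = V s := by
    intro s hs; simp [hVc, max_eq_left hs]
  have hV'eqVc' : ∀ s : ℝ, 0 ≤ s → Vc' s = V' s := by
    intro s hs; simp [hVc', max_eq_left hs]
  have hIcongr : ∀ u : ℝ, 0 ≤ u →
      (∫ s in (0:ℝ)..u, V s) = ∫ s in (0:ℝ)..u, Vc s := by
    intro u hu
    refine intervalIntegral.integral_congr ?_
    intro s hs
    rw [Set.uIcc_of_le hu] at hs
    exact (hVeqVc s hs.1).symm
  have hIcongr' : ∀ u : ℝ, 0 ≤ u →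
      (∫ s in (0:ℝ)..u, V' s) = ∫ s in (0:ℝ)..u, Vc' s := by
    intro u hu
    refine intervalIntegral.integral_congr ?_
    intro s hs
    rw [Set.uIcc_of_le hu] at hs
    exact (hV'eqVc' s hs.1).symm
  have hIdiff : ∀ u : ℝ, (∫ s in (0:ℝ)..u, Vc s) - (∫ s in (0:ℝ)..u, Vc' s)
      = ∫ s in (0:ℝ)..u, (Vc s - Vc' s) :=
    fun u => (intervalIntegral.integral_sub (hVcc.intervalIntegrable 0 u)
      (hVc'c.intervalIntegrable 0 u)).symm
  have habsint : ∀ u : ℝ, 0 ≤ u → |∫ s in (0:ℝ)..u, (Vc s - Vc' s)| ≤ F u := by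
    intro u hu
    exact intervalIntegral.abs_integral_le_integral_abs hu
  -- Step 1: |L t - L' t| ≤ μ * F t
  have hΔL : ∀ t : ℝ, 0 ≤ t → |L t - L' t| ≤ μ * F t := by
    intro t ht
    set ψ : ℝ → ℝ := fun s => X₀ + (∫ u in (0:ℝ)..s, (b + μ * V u)) + σ * W s with hψdef
    set ψ' : ℝ → ℝ := fun s => X₀ + (∫ u in (0:ℝ)..s, (b + μ * V' u)) + σ * W s with hψ'def
    have hψdiff : ∀ s : ℝ, 0 ≤ s → ψ s - ψ' s = μ * ∫ u in (0:ℝ)..s, (Vc u - Vc' u) := by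
      intro s hs
      have h1 : (∫ u in (0:ℝ)..s, (b + μ * V u)) = ∫ u in (0:ℝ)..s, (b + μ * Vc u) := by
        refine intervalIntegral.integral_congr ?_
        intro u hu
        rw [Set.uIcc_of_le hs] at hu
        show b + μ * V u = b + μ * Vc u
        rw [hVeqVc u hu.1]
      have h1' : (∫ u in (0:ℝ)..s, (b + μ * V' u)) = ∫ u in (0:ℝ)..s, (b + μ * Vc' u) := by
        refine intervalIntegral.integral_congr ?_
        intro u hu
        rw [Set.uIcc_of_le hs] at hu
        show b + μ * V' u = b + μ * Vc' u
        rw [hV'eqVc' u hu.1]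
      have h2 : (∫ u in (0:ℝ)..s, (b + μ * Vc u)) - (∫ u in (0:ℝ)..s, (b + μ * Vc' u))
          = ∫ u in (0:ℝ)..s, ((b + μ * Vc u) - (b + μ * Vc' u)) :=
        (intervalIntegral.integral_sub
          ((continuous_const.add (continuous_const.mul hVcc)).intervalIntegrable 0 s)
          ((continuous_const.add (continuous_const.mul hVc'c)).intervalIntegrable 0 s)).symm
      have h3 : (∫ u in (0:ℝ)..s, ((b + μ * Vc u) - (b + μ * Vc' u)))
          = ∫ u in (0:ℝ)..s, μ * (Vc u - Vc' u) := by
        congr 1; ext u; ring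
      have h4 : (∫ u in (0:ℝ)..s, μ * (Vc u - Vc' u))
          = μ * ∫ u in (0:ℝ)..s, (Vc u - Vc' u) := intervalIntegral.integral_const_mul μ _
      simp only [hψdef, hψ'def]
      rw [h1, h1']
      linarith [h2, h3, h4]
    have hψbnd : ∀ s : ℝ, 0 ≤ s → s ≤ t → |ψ s - ψ' s| ≤ μ * F t := by
      intro s hs hst
      rw [hψdiff s hs, abs_mul, abs_of_pos hμ]
      have := habsint s hs
      have := hFmono s t hs hst
      nlinarith
    have hε : 0 ≤ μ * F t := mul_nonneg hμ.le (hFnn t ht)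
    have hLcIcc : ContinuousOn L (Set.Icc 0 t) := hL.mono (Set.Icc_subset_Ici_self)
    have hL'cIcc : ContinuousOn L' (Set.Icc 0 t) := hL'.mono (Set.Icc_subset_Ici_self)
    have hfwd : L t - L' t ≤ μ * F t := by
      refine skorokhod_diff_bound X L ψ X' L' ψ' t (μ * F t) ht hε hL0 hL'0
        hLcIcc hL'cIcc hL'mono S hS hSmeas (fun s hs => heqX s hs)
        (fun s hs => heqX' s hs) hXnn' ?_
      intro s hs hst
      have := hψbnd s hs hst
      rw [abs_le] at this
      linarith [this.1]
    have hbwd : L' t - L t ≤ μ * F t := by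
      refine skorokhod_diff_bound X' L' ψ' X L ψ t (μ * F t) ht hε hL'0 hL0
        hL'cIcc hLcIcc hLmono S' hS' hS'meas (fun s hs => heqX' s hs)
        (fun s hs => heqX s hs) hXnn ?_
      intro s hs hst
      have := hψbnd s hs hst
      rw [abs_le] at this
      linarith [this.2]
    rw [abs_le]
    constructor <;> linarith
  -- Step 2: g t ≤ (γ + β) * F t for t ≥ 0
  have hgbnd : ∀ t : ℝ, 0 ≤ t → g t ≤ (γ + β) * F t := by
    intro t ht
    have hVdiff : V t - V' t = -γ * (∫ u in (0:ℝ)..t, (Vc u - Vc' u))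
        + (β / μ) * (L t - L' t) := by
      have h1 := heqV t ht
      have h2 := heqV' t ht
      rw [hIcongr t ht] at h1
      rw [hIcongr' t ht] at h2
      have h3 : γ * (∫ s in (0:ℝ)..t, Vc s) - γ * (∫ s in (0:ℝ)..t, Vc' s)
          = γ * ∫ u in (0:ℝ)..t, (Vc u - Vc' u) := by
        rw [← hIdiff t]; ring
      linarith [h1, h2, h3]
    have habs : |V t - V' t| ≤ γ * F t + β * F t := by
      rw [hVdiff]
      calc |(-γ) * (∫ u in (0:ℝ)..t, (Vc u - Vc' u)) + (β / μ) * (L t - L' t)|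
          ≤ |(-γ) * (∫ u in (0:ℝ)..t, (Vc u - Vc' u))| + |(β / μ) * (L t - L' t)| :=
            abs_add_le _ _
        _ ≤ γ * F t + β * F t := by
            rw [abs_mul, abs_mul, abs_neg, abs_of_pos hγ,
              abs_of_pos (div_pos hβ hμ)]
            have h1 := habsint t ht
            have h2 := hΔL t ht
            have h3 : (β / μ) * |L t - L' t| ≤ (β / μ) * (μ * F t) :=
              mul_le_mul_of_nonneg_left h2 (div_pos hβ hμ).le
            have h4 : (β / μ) * (μ * F t) = β * F t := by
              field_simp
            nlinarith
    have : g t = |V t - V' t| := by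
      simp only [hg, hVeqVc t ht, hV'eqVc' t ht]
    rw [this]
    linarith
  -- Step 3: Gronwall gives F t = 0 for t ≥ 0
  have hF0 : ∀ t : ℝ, 0 ≤ t → F t = 0 := by
    intro t ht
    have key : ∀ u ∈ Set.Icc (0:ℝ) t, ‖F u‖ ≤ gronwallBound 0 (γ + β) 0 (u - 0) := by
      apply norm_le_gronwallBound_of_norm_deriv_right_le
        (hFcont.continuousOn) (fun u _ => (hFd u).hasDerivWithinAt)
      · simp [hF, intervalIntegral.integral_same]
      · intro u hu
        rw [Real.norm_eq_abs, Real.norm_eq_abs, abs_of_nonneg (hgnn u),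
          abs_of_nonneg (hFnn u hu.1)]
        have := hgbnd u hu.1
        linarith
    have := key t ⟨ht, le_refl t⟩
    rw [gronwallBound_ε0_δ0, Real.norm_eq_abs] at this
    have := abs_nonneg (F t)
    have h := key t ⟨ht, le_refl t⟩
    rw [gronwallBound_ε0_δ0, Real.norm_eq_abs] at h
    exact abs_eq_zero.mp (le_antisymm h (abs_nonneg _))
  -- conclusion
  intro t ht
  have hVeq : ∀ s : ℝ, 0 ≤ s → V s = V' s := by
    intro s hs
    have h1 := hgbnd s hs
    rw [hF0 s hs, mul_zero] at h1
    have : g s = 0 := le_antisymm h1 (hgnn s)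
    have h2 : |V s - V' s| = 0 := by
      rw [← hVeqVc s hs, ← hV'eqVc' s hs]; exact this
    have := abs_eq_zero.mp h2
    linarith
  have hLeq : L t = L' t := by
    have h1 := hΔL t ht
    rw [hF0 t ht, mul_zero] at h1
    have := abs_eq_zero.mp (le_antisymm h1 (abs_nonneg _))
    linarith
  refine ⟨?_, hVeq t ht, hLeq⟩
  have hint : (∫ s in (0:ℝ)..t, (b + μ * V s)) = ∫ s in (0:ℝ)..t, (b + μ * V' s) := by
    refine intervalIntegral.integral_congr ?_
    intro s hs
    rw [Set.uIcc_of_le ht] at hs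
    show b + μ * V s = b + μ * V' s
    rw [hVeq s hs.1]
  rw [heqX t ht, heqX' t ht, hint, hLeq]
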